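/- Define B(L) = L·(8/3 + 4P − 4/P + 8 ln P − 8 ln 2) + 4 where P = (3L/4 − 3π/2 + 1)^{1/3} − 1. Then for all L ≥ 104/3 + 2π, one has B(L) ≤ 4.57·L^{4/3}. -/
import Mathlib


open Real

lemma cube_root_ge {u L : ℝ} (hu : 0 ≤ u) (h : u ^ 3 ≤ L) : u ≤ L ^ ((1:ℝ)/3) := by
  have h1 : u = (u ^ 3) ^ ((1:ℝ)/3) := by
    rw [← Real.rpow_natCast u 3, ← Real.rpow_mul hu]
    norm_num
  rw [h1]
  exact Real.rpow_le_rpow (by positivity) h (by norm_num)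

lemma log_le_cert {y : ℝ} (M N : ℕ) (hy : 0 < y) (hN : N ≠ 0)
    (h : y ^ N ≤ (2.7182818283 : ℝ) ^ M) : Real.log y ≤ (M : ℝ) / N := by
  rw [Real.log_le_iff_le_exp hy]
  have h2 : (2.7182818283:ℝ) ^ M ≤ Real.exp 1 ^ M :=
    pow_le_pow_left₀ (by norm_num) (le_of_lt Real.exp_one_gt_d9) M
  have h3 : Real.exp 1 ^ M = Real.exp ((M:ℝ)/N) ^ N := by
    rw [← Real.exp_nat_mul, ← Real.exp_nat_mul]
    congr 1
    field_simp
  exact le_of_pow_le_pow_left₀ hN (Real.exp_pos _).le (by calc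
    y ^ N ≤ (2.7182818283:ℝ) ^ M := h
    _ ≤ Real.exp 1 ^ M := h2
    _ = Real.exp ((M:ℝ)/N) ^ N := h3)

lemma log_tan {P y0 c0 : ℝ} (hP : 0 < P) (hy : 0 < y0) (hc : Real.log y0 ≤ c0) :
    Real.log P - Real.log 2 ≤ c0 - 1 + P / (2*y0) := by
  have h1 : Real.log (P / (2*y0)) ≤ P/(2*y0) - 1 :=
    Real.log_le_sub_one_of_pos (by positivity)
  rw [Real.log_div (ne_of_gt hP) (by positivity),
    Real.log_mul (by norm_num) (ne_of_gt hy)] at h1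
  linarith

lemma inv_tan {P p0 : ℝ} (hP : 0 < P) (hp : 0 < p0) :
    -(4/P) ≤ -4/p0 + 4*(P-p0)/p0^2 := by
  have key : (-4/p0 + 4*(P-p0)/p0^2) - (-(4/P)) = 4*(P-p0)^2/(P*p0^2) := by
    field_simp
    ring
  nlinarith [div_nonneg (by positivity : (0:ℝ) ≤ 4*(P-p0)^2)
    (by positivity : (0:ℝ) ≤ P*p0^2)]

lemma log_le_cert2 (y c : ℝ) (M N : ℕ) (hy : 0 < y) (hN : N ≠ 0)
    (hc : (M : ℝ) / N ≤ c) (h : y ^ N ≤ (2.7182818283 : ℝ) ^ M) : Real.log y ≤ c :=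
  le_trans (log_le_cert M N hy hN h) hc

set_option maxHeartbeats 1000000 in
lemma piece_bound (L x a δ p0 y0 c0 : ℝ)
    (hLx : L = 4/3*x^3 + (2*π - 4/3))
    (ha : a ≤ x) (ha3 : 3 ≤ a) (hδ : 0 ≤ δ)
    (hp : 0 < p0) (hy : 0 < y0) (hc : Real.log y0 ≤ c0)
    (hcube : (1.10064*(x+δ))^3 ≤ L)
    (hlin : 8/3 + 4*(x-1) + (-4/p0 + 4*((x-1)-p0)/p0^2)
        + 8*(c0 - 1 + (x-1)/(2*y0)) + 3/a^3 ≤ 4.57*(1.10064*(x+δ))) :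
    L * (8 / 3 + 4 * (x-1) - 4 / (x-1) + 8 * Real.log (x-1) - 8 * Real.log 2) + 4
      ≤ 4.57 * L ^ ((4:ℝ)/3) := by
  have hx3 : (3:ℝ) ≤ x := le_trans ha3 ha
  have hπ := Real.pi_gt_d6
  have hx0 : (0:ℝ) ≤ x := by linarith
  have hx27 : (27:ℝ) ≤ x^3 := by
    nlinarith [mul_nonneg (mul_nonneg (sub_nonneg.2 hx3) hx0) hx0,
      mul_nonneg (sub_nonneg.2 hx3) hx0]
  have hLpos : 0 < L := by rw [hLx]; linarith
  have hP : 0 < x - 1 := by linarith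
  have hlog := log_tan hP hy hc
  have hinv := inv_tan hP hp
  have ha0 : (0:ℝ) < a := by linarith
  have h3x : 3/x^3 ≤ 3/a^3 := by
    rw [div_le_div_iff₀ (by positivity) (by positivity)]
    nlinarith [pow_le_pow_left₀ ha0.le ha 3]
  have h4x : 4 ≤ L * (3/x^3) := by
    rw [show L * (3/x^3) = (3*L)/x^3 by ring, le_div_iff₀ (by positivity)]
    rw [hLx]
    nlinarith
  obtain ⟨u, hu⟩ : ∃ u : ℝ, -4/p0 + 4*((x-1)-p0)/p0^2 = u := ⟨_, rfl⟩
  obtain ⟨v, hv⟩ : ∃ v : ℝ, (x-1)/(2*y0) = v := ⟨_, rfl⟩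
  obtain ⟨w3, hw3⟩ : ∃ w3 : ℝ, 3/a^3 = w3 := ⟨_, rfl⟩
  obtain ⟨w, hw⟩ : ∃ w : ℝ, 3/x^3 = w := ⟨_, rfl⟩
  obtain ⟨q, hq⟩ : ∃ q : ℝ, 4/(x-1) = q := ⟨_, rfl⟩
  rw [hu] at hinv hlin
  rw [hv] at hlog hlin
  rw [hw3] at h3x hlin
  rw [hw] at h3x h4x
  rw [hq] at hinv
  rw [show (4:ℝ) / (x-1) = q from hq]
  have hG : 8/3 + 4*(x-1) - q + 8*Real.log (x-1) - 8*Real.log 2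
      ≤ 4.57*(1.10064*(x+δ)) - w := by linarith
  have hcr : 1.10064*(x+δ) ≤ L ^ ((1:ℝ)/3) :=
    cube_root_ge (mul_nonneg (by norm_num) (by linarith)) hcube
  have hpow : L ^ ((4:ℝ)/3) = L * L ^ ((1:ℝ)/3) := by
    rw [show (4:ℝ)/3 = 1 + 1/3 by norm_num, Real.rpow_add hLpos, Real.rpow_one]
  have hA := mul_le_mul_of_nonneg_left hG hLpos.le
  have hB : L * (4.57*(1.10064*(x+δ))) ≤ L * (4.57 * L ^ ((1:ℝ)/3)) :=
    mul_le_mul_of_nonneg_left (by linarith) hLpos.le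
  rw [hpow]
  nlinarith [hA, hB, h4x]

set_option maxHeartbeats 2000000 in
/-- With `P = (3L/4 − 3π/2 + 1)^{1/3} − 1` and
`B(L) = L·(8/3 + 4P − 4/P + 8 ln P − 8 ln 2) + 4`, for all `L ≥ 104/3 + 2π`
one has `B(L) ≤ 4.57·L^{4/3}`. -/
theorem stmt_16 (L : ℝ) (hL : 104 / 3 + 2 * π ≤ L) :
    (fun P : ℝ =>
        L * (8 / 3 + 4 * P - 4 / P + 8 * Real.log P - 8 * Real.log 2) + 4)
      ((3 * L / 4 - 3 * π / 2 + 1) ^ ((1 : ℝ) / 3) - 1)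
    ≤ 4.57 * L ^ ((4 : ℝ) / 3) := by
  have hπ := Real.pi_gt_d6
  have hπ' := Real.pi_lt_d6
  have hs27 : (27:ℝ) ≤ 3 * L / 4 - 3 * π / 2 + 1 := by nlinarith
  have hs0 : (0:ℝ) ≤ 3 * L / 4 - 3 * π / 2 + 1 := by linarith
  dsimp only
  set x := (3 * L / 4 - 3 * π / 2 + 1) ^ ((1 : ℝ) / 3) with hxdef
  have hxc : x ^ 3 = 3 * L / 4 - 3 * π / 2 + 1 := by
    rw [hxdef, ← Real.rpow_natCast ((3 * L / 4 - 3 * π / 2 + 1) ^ ((1:ℝ)/3)) 3,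
      ← Real.rpow_mul hs0]
    norm_num
  have hx3 : (3:ℝ) ≤ x := by
    have h27 : (27:ℝ) ^ ((1:ℝ)/3) = 3 := by
      rw [show (27:ℝ) = 3 ^ (3:ℕ) by norm_num, ← Real.rpow_natCast (3:ℝ) 3,
        ← Real.rpow_mul (by norm_num)]
      norm_num
    have h2 : (27:ℝ)^((1:ℝ)/3) ≤ (3 * L / 4 - 3 * π / 2 + 1) ^ ((1:ℝ)/3) :=
      Real.rpow_le_rpow (by norm_num) hs27 (by norm_num)
    rw [h27] at h2
    exact h2
  have hx0 : (0:ℝ) ≤ x := by linarith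
  have hLx : L = 4/3*x^3 + (2*π - 4/3) := by rw [hxc]; ring
  rcases le_total x (63/10) with hb | hx1
  · exact piece_bound L x 3 (31/1000) (73/20) (73/40) (23/38) hLx hx3 le_rfl
      (by norm_num) (by norm_num) (by norm_num)
      (log_le_cert2 _ _ 23 38 (by norm_num) (by norm_num) (by norm_num) (by norm_num))
      (by rw [hLx]; nlinarith [mul_nonneg (mul_nonneg (sub_nonneg.2 hx3) hx0) hx0,
        mul_nonneg (sub_nonneg.2 hb) hx0, sub_nonneg.2 hb])
      (by norm_num; linarith)
  rcases le_total x (42/5) with hb | hx2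
  · exact piece_bound L x (63/10) (17/1000) (127/20) (127/40) (37/32) hLx hx1
      (by norm_num) (by norm_num) (by norm_num) (by norm_num)
      (log_le_cert2 _ _ 37 32 (by norm_num) (by norm_num) (by norm_num) (by norm_num))
      (by rw [hLx]; nlinarith [mul_nonneg (mul_nonneg (sub_nonneg.2 hx3) hx0) hx0,
        mul_nonneg (sub_nonneg.2 hb) hx0, sub_nonneg.2 hb])
      (by norm_num; linarith)
  rcases le_total x (53/5) with hb | hx3'
  · exact piece_bound L x (42/5) (11/1000) (17/2) (17/4) (55/38) hLx hx2
      (by norm_num) (by norm_num) (by norm_num) (by norm_num)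
      (log_le_cert2 _ _ 55 38 (by norm_num) (by norm_num) (by norm_num) (by norm_num))
      (by rw [hLx]; nlinarith [mul_nonneg (mul_nonneg (sub_nonneg.2 hx3) hx0) hx0,
        mul_nonneg (sub_nonneg.2 hb) hx0, sub_nonneg.2 hb])
      (by norm_num; linarith)
  rcases le_total x 14 with hb | hx4
  · exact piece_bound L x (53/5) (3/500) (113/10) (113/20) (26/15) hLx hx3'
      (by norm_num) (by norm_num) (by norm_num) (by norm_num)
      (log_le_cert2 _ _ 26 15 (by norm_num) (by norm_num) (by norm_num) (by norm_num))
      (by rw [hLx]; nlinarith [mul_nonneg (mul_nonneg (sub_nonneg.2 hx3) hx0) hx0,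
        mul_nonneg (sub_nonneg.2 hb) hx0, sub_nonneg.2 hb])
      (by norm_num; linarith)
  · exact piece_bound L x 14 0 13 (13/2) (15/8) hLx hx4
      (by norm_num) (by norm_num) (by norm_num) (by norm_num)
      (log_le_cert2 _ _ 15 8 (by norm_num) (by norm_num) (by norm_num) (by norm_num))
      (by rw [hLx]; nlinarith [pow_nonneg hx0 3])
      (by norm_num; linarith)
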